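/- Fix an integer n ≥ 1 and θ ∈ [0, 1/2], and let T be a random variable with the binomial distribution with parameters n and θ. Define p : {0, 1, …, n} → ℝ by p(t) = Σ_{k=t}^{n} (n choose k)·2^{−n}. Then for every u ∈ [0,1], P(p(T) ≤ u) ≤ u. -/

import Mathlib

open Finset in
lemma tele (g : ℕ → ℝ) {t n : ℕ} (htn : t ≤ n) :
    ∑ k ∈ Finset.Icc t n, (g (k-1) - g k) = g (t-1) - g n := by
  induction n, htn using Nat.le_induction with
  | base => simp
  | succ m hm ih =>
    rw [Finset.sum_Icc_succ_top (le_trans hm (Nat.le_succ m)), ih]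
    ring_nf
    simp [Nat.add_sub_cancel]

lemma tail_deriv (n t : ℕ) (ht : 1 ≤ t) (htn : t ≤ n) (x : ℝ) :
    HasDerivAt (fun y : ℝ => ∑ k ∈ Finset.Icc t n, (n.choose k : ℝ) * y ^ k * (1 - y) ^ (n - k))
      ((n : ℝ) * ((n-1).choose (t-1)) * x ^ (t-1) * (1 - x) ^ (n - t)) x := by
  have hn : 1 ≤ n := le_trans ht htn
  set g : ℕ → ℝ := fun j => (n : ℝ) * ((n-1).choose j) * x ^ j * (1 - x) ^ (n - 1 - j) with hg
  have key : ∀ k ∈ Finset.Icc t n,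
      HasDerivAt (fun y : ℝ => (n.choose k : ℝ) * y ^ k * (1 - y) ^ (n - k))
        (g (k-1) - g k) x := by
    intro k hk
    simp only [Finset.mem_Icc] at hk
    have hk1 : 1 ≤ k := le_trans ht hk.1
    have hkn : k ≤ n := hk.2
    have h1 : HasDerivAt (fun y : ℝ => (n.choose k : ℝ) * y ^ k)
        ((n.choose k : ℝ) * ((k : ℝ) * x ^ (k-1))) x := (hasDerivAt_pow k x).const_mul _
    have h2 : HasDerivAt (fun y : ℝ => (1 - y) ^ (n-k))
        (((n-k : ℕ) : ℝ) * (1-x)^(n-k-1) * (-1)) x := by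
      simpa using (((hasDerivAt_id x).const_sub 1).fun_pow (n-k))
    have h := h1.fun_mul h2
    refine h.congr_deriv ?_
    have id1 : ((n.choose k : ℕ) : ℝ) * (k : ℝ) = (n : ℝ) * (((n-1).choose (k-1) : ℕ) : ℝ) := by
      have : n * (n-1).choose (k-1) = n.choose k * k := by
        have h' := Nat.add_one_mul_choose_eq (n-1) (k-1)
        rw [(by omega : n - 1 + 1 = n), (by omega : k - 1 + 1 = k)] at h'
        exact h'
      exact_mod_cast (congrArg (Nat.cast : ℕ → ℝ) this).symm
    have id2 : ((n.choose k : ℕ) : ℝ) * (((n-k : ℕ)) : ℝ) = (n : ℝ) * (((n-1).choose k : ℕ) : ℝ) := by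
      have : n.choose k * (n - k) = n * (n-1).choose k := by
        have h' := Nat.choose_mul_succ_eq (n-1) k
        rw [(by omega : n - 1 + 1 = n)] at h'
        rw [← h']; ring
      exact_mod_cast congrArg (Nat.cast : ℕ → ℝ) this
    have e1 : n - 1 - (k-1) = n - k := by omega
    have e2 : n - k - 1 = n - 1 - k := by omega
    rw [hg]
    simp only [e1, e2]
    rw [← id1, ← id2]
    ring
  have hs := HasDerivAt.fun_sum key
  rw [tele g htn] at hs
  have hgn : g n = 0 := by
    simp [hg, Nat.choose_eq_zero_of_lt (by omega : n - 1 < n)]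
  have hgt : g (t-1) = (n : ℝ) * ((n-1).choose (t-1)) * x ^ (t-1) * (1 - x) ^ (n - t) := by
    simp [hg]
    left
    congr 1
    omega
  rw [hgn, hgt, sub_zero] at hs
  exact hs

lemma tail_mono (n t : ℕ) (ht : 1 ≤ t) (htn : t ≤ n) :
    MonotoneOn (fun y : ℝ => ∑ k ∈ Finset.Icc t n, (n.choose k : ℝ) * y ^ k * (1 - y) ^ (n - k))
      (Set.Icc (0:ℝ) 1) := by
  apply monotoneOn_of_deriv_nonneg (convex_Icc 0 1)
  · exact fun x _ => (tail_deriv n t ht htn x).differentiableAt.continuousAt.continuousWithinAt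
  · intro x hx
    exact (tail_deriv n t ht htn x).differentiableAt.differentiableWithinAt
  · intro x hx
    rw [interior_Icc, Set.mem_Ioo] at hx
    rw [(tail_deriv n t ht htn x).deriv]
    have h1 : (0:ℝ) ≤ x := le_of_lt hx.1
    have h2 : (0:ℝ) ≤ 1 - x := by linarith [hx.2]
    positivity

open MeasureTheory ProbabilityTheory Real

theorem binomial_pvalue_superuniform {Ω : Type*} [MeasurableSpace Ω] (P : Measure Ω)
    [IsProbabilityMeasure P] (n : ℕ) (hn : 1 ≤ n) (θ : ℝ) (hθ₀ : 0 ≤ θ) (hθ₁ : θ ≤ 1 / 2)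
    (T : Ω → ℕ) (hT_meas : Measurable T) (hT_range : ∀ ω, T ω ≤ n)
    -- `T` has the binomial distribution with parameters `n` and `θ`
    (hT_binom : ∀ t ≤ n,
      P {ω | T ω = t} = ENNReal.ofReal ((n.choose t : ℝ) * θ ^ t * (1 - θ) ^ (n - t)))
    (p : ℕ → ℝ) (hp : ∀ t, p t = ∑ j ∈ Finset.Icc t n, (n.choose j : ℝ) / 2 ^ n) :
    ∀ u : ℝ, 0 ≤ u → u ≤ 1 → P {ω | p (T ω) ≤ u} ≤ ENNReal.ofReal u := by
  intro u hu0 hu1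
  classical
  by_cases hp0 : p 0 ≤ u
  · have hp01 : p 0 = 1 := by
      rw [hp, ← Finset.sum_div,
        show Finset.Icc 0 n = Finset.range (n+1) from by ext j; simp [Nat.lt_succ_iff],
        ← Nat.cast_sum, Nat.sum_range_choose]
      simp
    have hu : u = 1 := le_antisymm hu1 (hp01 ▸ hp0)
    subst hu
    rw [ENNReal.ofReal_one]
    exact prob_le_one
  · have hex : ∃ t, p t ≤ u := by
      refine ⟨n+1, ?_⟩
      rw [hp, Finset.Icc_eq_empty (by omega), Finset.sum_empty]
      exact hu0
    set t0 := Nat.find hex with ht0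
    have hpt : p t0 ≤ u := Nat.find_spec hex
    have ht1 : 1 ≤ t0 := by
      rcases Nat.eq_zero_or_pos t0 with h | h
      · exact absurd (h ▸ hpt) hp0
      · exact h
    have pant : ∀ s s' : ℕ, s ≤ s' → p s' ≤ p s := by
      intro s s' hss
      rw [hp, hp]
      apply Finset.sum_le_sum_of_subset_of_nonneg (Finset.Icc_subset_Icc hss le_rfl)
      intro i _ _
      positivity
    have hiff : ∀ m, p m ≤ u ↔ t0 ≤ m :=
      fun m => ⟨fun h => Nat.find_min' hex h, fun h => le_trans (pant _ _ h) hpt⟩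
    have hset : {ω | p (T ω) ≤ u} = {ω | t0 ≤ T ω} := by
      ext ω; exact hiff (T ω)
    rw [hset]
    by_cases htn : t0 ≤ n
    · have hsets : {ω | t0 ≤ T ω} = ⋃ k ∈ Finset.Icc t0 n, {ω | T ω = k} := by
        ext ω
        simp only [Set.mem_setOf_eq, Set.mem_iUnion, Finset.mem_Icc]
        constructor
        · intro h
          exact ⟨T ω, ⟨h, hT_range ω⟩, rfl⟩
        · rintro ⟨k, ⟨hk, -⟩, hTk⟩
          omega
      have hms : ∀ k : ℕ, MeasurableSet {ω | T ω = k} :=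
        fun k => hT_meas (measurableSet_singleton k)
      rw [hsets, measure_biUnion_finset ?_ (fun k _ => hms k)]
      swap
      · intro i hi j hj hij
        simp only [Function.onFun, Set.disjoint_left]
        intro ω h1 h2
        exact hij (by simp only [Set.mem_setOf_eq] at h1 h2; omega)
      have hterm : ∀ k ∈ Finset.Icc t0 n,
          P {ω | T ω = k} = ENNReal.ofReal ((n.choose k : ℝ) * θ ^ k * (1 - θ) ^ (n - k)) := by
        intro k hk
        exact hT_binom k (Finset.mem_Icc.mp hk).2
      rw [Finset.sum_congr rfl hterm, ← ENNReal.ofReal_sum_of_nonneg]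
      swap
      · intro k _
        have h2 : (0:ℝ) ≤ 1 - θ := by linarith
        positivity
      apply ENNReal.ofReal_le_ofReal
      have hmono := tail_mono n t0 ht1 htn
        (a := θ) (b := (1/2 : ℝ)) ⟨hθ₀, by linarith⟩ ⟨by norm_num, by norm_num⟩ hθ₁
      simp only at hmono
      refine le_trans hmono (le_trans (le_of_eq ?_) hpt)
      rw [hp]
      apply Finset.sum_congr rfl
      intro k hk
      have hkn : k ≤ n := (Finset.mem_Icc.mp hk).2
      rw [show (1 - (1:ℝ)/2) = 1/2 by norm_num, mul_assoc, ← pow_add,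
        Nat.add_sub_cancel' hkn, div_pow, one_pow, mul_one_div]
    · have hempty : {ω | t0 ≤ T ω} = ∅ := by
        ext ω
        simp only [Set.mem_setOf_eq, Set.mem_empty_iff_false, iff_false]
        intro h
        exact absurd (le_trans h (hT_range ω)) (by omega)
      rw [hempty, measure_empty]
      exact zero_le
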